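/- Fix an integer n ≥ 1 and let τ be the tau function of Σ(2,7,14n-5). Define M_i := 14i+1 for 0 ≤ i ≤ 2n-1; M_i := 14(n + i/2) - 9 for even i with 2n ≤ i ≤ 4n-3 and M_i := 14(n + (i-1)/2) + 1 for odd i with 2n ≤ i ≤ 4n-3; and M_i := 14(i-n) + 15 for 4n-2 ≤ i ≤ 6n-4. Define m_i := 14i for 0 ≤ i ≤ 2n-1; m_i := 14(n + i/2) - 10 for even i with 2n ≤ i ≤ 4n-2 and m_i := 14(n + (i-1)/2) for odd i with 2n ≤ i ≤ 4n-2; and m_i := 14(i-n) + 4 for 4n-1 ≤ i ≤ 6n-3. Then: (a) τ(j+1) ≥ τ(j) whenever m_i ≤ j < M_i with 0 ≤ i ≤ 6n-4, τ(j+1) ≤ τ(j) whenever M_i ≤ j < m_{i+1} with 0 ≤ i ≤ 6n-4, and τ(j+1) ≥ τ(j) for all j ≥ m_{6n-3}; (b) τ(M_i) = 1-2i for 0 ≤ i ≤ n-1, τ(M_i) = 2-n-i for n ≤ i ≤ 2n-1, τ(M_i) = 3-3n for 2n ≤ i ≤ 4n-4, τ(M_i) = 6-7n+i for 4n-3 ≤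 i ≤ 5n-3, and τ(M_i) = 9-12n+2i for 5n-2 ≤ i ≤ 6n-4; (c) τ(m_i) = -2i for 0 ≤ i ≤ n-1, τ(m_i) = 1-n-i for n ≤ i ≤ 2n-1, τ(m_i) = 2-3n for 2n ≤ i ≤ 4n-3, τ(m_i) = 4-7n+i for 4n-2 ≤ i ≤ 5n-2, and τ(m_i) = 6-12n+2i for 5n-1 ≤ i ≤ 6n-3. -/

import Mathlib

/-- `Δ_j = 1 + 2j - ⌈j/2⌉ - ⌈5j/7⌉ - ⌈j(11n-4)/(14n-5)⌉` for the Seifert data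
`(-2, (2,1), (7,5), (14n-5, 11n-4))` of `Σ(2,7,14n-5)`. -/
noncomputable def delta27m5 (n j : ℤ) : ℤ :=
  1 + 2 * j - ⌈(j : ℚ) / 2⌉ - ⌈(5 * j : ℚ) / 7⌉ - ⌈(j * (11 * n - 4) : ℚ) / (14 * n - 5 : ℚ)⌉

/-- The tau function `τ(k) = Σ_{j=0}^{k-1} Δ_j` of `Σ(2,7,14n-5)`. -/
noncomputable def tau27m5 (n k : ℤ) : ℤ := ∑ j ∈ Finset.range k.toNat, delta27m5 n (j : ℤ)

/-- `M_i = 14i+1` for `i ≤ 2n-1`; `M_i = 14(n + i/2) - 9` (`i` even) or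
`14(n + (i-1)/2) + 1` (`i` odd) for `2n ≤ i ≤ 4n-3`; `M_i = 14(i-n) + 15` for `4n-2 ≤ i`. -/
def M27m5 (n i : ℤ) : ℤ :=
  if i ≤ 2 * n - 1 then 14 * i + 1
  else if i ≤ 4 * n - 3 then
    (if i % 2 = 0 then 14 * (n + i / 2) - 9 else 14 * (n + (i - 1) / 2) + 1)
  else 14 * (i - n) + 15

/-- `m_i = 14i` for `i ≤ 2n-1`; `m_i = 14(n + i/2) - 10` (`i` even) or
`14(n + (i-1)/2)` (`i` odd) for `2n ≤ i ≤ 4n-2`; `m_i = 14(i-n) + 4` for `4n-1 ≤ i`. -/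
def m27m5 (n i : ℤ) : ℤ :=
  if i ≤ 2 * n - 1 then 14 * i
  else if i ≤ 4 * n - 2 then
    (if i % 2 = 0 then 14 * (n + i / 2) - 10 else 14 * (n + (i - 1) / 2))
  else 14 * (i - n) + 4

lemma int_ceil_le' (a b c : ℤ) (hb : 0 < b) (h2 : a ≤ b * c) :
    ⌈(a : ℚ) / (b : ℚ)⌉ ≤ c := by
  have hb' : (0:ℚ) < (b:ℚ) := by exact_mod_cast hb
  have h2' : (a:ℚ) ≤ (b:ℚ) * (c:ℚ) := by exact_mod_cast h2
  rw [Int.ceil_le, div_le_iff₀ hb']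
  linarith

lemma int_le_ceil' (a b c : ℤ) (hb : 0 < b) (h1 : b * c - b < a) :
    c ≤ ⌈(a : ℚ) / (b : ℚ)⌉ := by
  have hb' : (0:ℚ) < (b:ℚ) := by exact_mod_cast hb
  have h1' : (b:ℚ) * (c:ℚ) - (b:ℚ) < (a:ℚ) := by exact_mod_cast h1
  rw [Int.le_ceil_iff, lt_div_iff₀ hb']
  linarith

lemma int_ceil_eq' (a b c : ℤ) (hb : 0 < b) (h1 : b * c - b < a) (h2 : a ≤ b * c) :
    ⌈(a : ℚ) / (b : ℚ)⌉ = c :=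
  le_antisymm (int_ceil_le' a b c hb h2) (int_le_ceil' a b c hb h1)

lemma delta_formula (n j c1 c2 c3 : ℤ) (hn : 1 ≤ n)
    (h1a : 2 * c1 - 2 < j) (h1b : j ≤ 2 * c1)
    (h2a : 7 * c2 - 7 < 5 * j) (h2b : 5 * j ≤ 7 * c2)
    (h3a : (14 * n - 5) * c3 - (14 * n - 5) < j * (11 * n - 4))
    (h3b : j * (11 * n - 4) ≤ (14 * n - 5) * c3) :
    delta27m5 n j = 1 + 2 * j - c1 - c2 - c3 := by
  have hb3 : (0:ℤ) < 14 * n - 5 := by omega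
  have e1 := int_ceil_eq' j 2 c1 (by norm_num) (by omega) (by omega)
  have e2 := int_ceil_eq' (5 * j) 7 c2 (by norm_num) (by omega) (by omega)
  have e3 := int_ceil_eq' (j * (11 * n - 4)) (14 * n - 5) c3 hb3 h3a h3b
  push_cast at e1 e2 e3
  unfold delta27m5
  rw [e1, e2, e3]

lemma delta_ge (n j u1 u2 u3 : ℤ) (hn : 1 ≤ n)
    (h1 : j ≤ 2 * u1) (h2 : 5 * j ≤ 7 * u2)
    (h3 : j * (11 * n - 4) ≤ (14 * n - 5) * u3) :
    1 + 2 * j - u1 - u2 - u3 ≤ delta27m5 n j := by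
  have hb3 : (0:ℤ) < 14 * n - 5 := by omega
  have e1 := int_ceil_le' j 2 u1 (by norm_num) (by omega)
  have e2 := int_ceil_le' (5 * j) 7 u2 (by norm_num) (by omega)
  have e3 := int_ceil_le' (j * (11 * n - 4)) (14 * n - 5) u3 hb3 h3
  push_cast at e1 e2 e3
  unfold delta27m5
  omega

lemma delta_le (n j l1 l2 l3 : ℤ) (hn : 1 ≤ n)
    (h1 : 2 * l1 - 2 < j) (h2 : 7 * l2 - 7 < 5 * j)
    (h3 : (14 * n - 5) * l3 - (14 * n - 5) < j * (11 * n - 4)) :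
    delta27m5 n j ≤ 1 + 2 * j - l1 - l2 - l3 := by
  have hb3 : (0:ℤ) < 14 * n - 5 := by omega
  have e1 := int_le_ceil' j 2 l1 (by norm_num) (by omega)
  have e2 := int_le_ceil' (5 * j) 7 l2 (by norm_num) (by omega)
  have e3 := int_le_ceil' (j * (11 * n - 4)) (14 * n - 5) l3 hb3 h3
  push_cast at e1 e2 e3
  unfold delta27m5
  omega

lemma tau_step (n k : ℤ) (hk : 0 ≤ k) :
    tau27m5 n (k + 1) = tau27m5 n k + delta27m5 n k := by
  unfold tau27m5
  rw [show (k+1).toNat = k.toNat + 1 by omega, Finset.sum_range_succ,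
    Int.toNat_of_nonneg hk]

set_option maxHeartbeats 2000000 in
lemma delta_eval (n j : ℤ) (hn : 1 ≤ n) (hj : 0 ≤ j) (hj5 : j < 70 * n - 25) :
    delta27m5 n j =
      if j % 14 = 0 then 1
      else if j % 14 = 3 then -1
      else if j % 14 = 9 then (if j < 14 * n - 5 then -1 else 0)
      else if j % 14 = 13 then (if j < 42 * n - 15 then -1 else 0)
      else if j % 14 = 4 then (if j < 28 * n - 10 then 0 else 1)
      else if j % 14 = 8 then (if j < 56 * n - 20 then 0 else 1)
      else 0 := by
  obtain ⟨q, r, hr0, hr13, rfl⟩ : ∃ q r : ℤ, 0 ≤ r ∧ r ≤ 13 ∧ j = 14 * q + r :=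
    ⟨j / 14, j % 14, by omega, by omega, by omega⟩
  have hq : 0 ≤ q := by omega
  interval_cases r
  · rw [delta_formula n (14*q+0) (7*q+0) (10*q+0) (11*q+0) hn (by omega) (by omega)
      (by omega) (by omega) (by linarith) (by linarith)]
    split_ifs <;> omega
  · rw [delta_formula n (14*q+1) (7*q+1) (10*q+1) (11*q+1) hn (by omega) (by omega)
      (by omega) (by omega) (by linarith) (by linarith)]
    split_ifs <;> omega
  · rw [delta_formula n (14*q+2) (7*q+1) (10*q+2) (11*q+2) hn (by omega) (by omega)
      (by omega) (by omega) (by linarith) (by linarith)]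
    split_ifs <;> omega
  · rw [delta_formula n (14*q+3) (7*q+2) (10*q+3) (11*q+3) hn (by omega) (by omega)
      (by omega) (by omega) (by linarith) (by linarith)]
    split_ifs <;> omega
  · rcases lt_or_ge (14 * q + 4) (28 * n - 10) with h | h
    · rw [delta_formula n (14*q+4) (7*q+2) (10*q+3) (11*q+4) hn (by omega) (by omega)
        (by omega) (by omega) (by linarith) (by linarith)]
      split_ifs <;> omega
    · rw [delta_formula n (14*q+4) (7*q+2) (10*q+3) (11*q+3) hn (by omega) (by omega)
        (by omega) (by omega) (by linarith) (by linarith)]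
      split_ifs <;> omega
  · rw [delta_formula n (14*q+5) (7*q+3) (10*q+4) (11*q+4) hn (by omega) (by omega)
      (by omega) (by omega) (by linarith) (by linarith)]
    split_ifs <;> omega
  · rw [delta_formula n (14*q+6) (7*q+3) (10*q+5) (11*q+5) hn (by omega) (by omega)
      (by omega) (by omega) (by linarith) (by linarith)]
    split_ifs <;> omega
  · rw [delta_formula n (14*q+7) (7*q+4) (10*q+5) (11*q+6) hn (by omega) (by omega)
      (by omega) (by omega) (by linarith) (by linarith)]
    split_ifs <;> omega
  · rcases lt_or_ge (14 * q + 8) (56 * n - 20) with h | h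
    · rw [delta_formula n (14*q+8) (7*q+4) (10*q+6) (11*q+7) hn (by omega) (by omega)
        (by omega) (by omega) (by linarith) (by linarith)]
      split_ifs <;> omega
    · rw [delta_formula n (14*q+8) (7*q+4) (10*q+6) (11*q+6) hn (by omega) (by omega)
        (by omega) (by omega) (by linarith) (by linarith)]
      split_ifs <;> omega
  · rcases lt_or_ge (14 * q + 9) (14 * n - 5) with h | h
    · rw [delta_formula n (14*q+9) (7*q+5) (10*q+7) (11*q+8) hn (by omega) (by omega)
        (by omega) (by omega) (by linarith) (by linarith)]
      split_ifs <;> omega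
    · rw [delta_formula n (14*q+9) (7*q+5) (10*q+7) (11*q+7) hn (by omega) (by omega)
        (by omega) (by omega) (by linarith) (by linarith)]
      split_ifs <;> omega
  · rw [delta_formula n (14*q+10) (7*q+5) (10*q+8) (11*q+8) hn (by omega) (by omega)
      (by omega) (by omega) (by linarith) (by linarith)]
    split_ifs <;> omega
  · rw [delta_formula n (14*q+11) (7*q+6) (10*q+8) (11*q+9) hn (by omega) (by omega)
      (by omega) (by omega) (by linarith) (by linarith)]
    split_ifs <;> omega
  · rw [delta_formula n (14*q+12) (7*q+6) (10*q+9) (11*q+10) hn (by omega) (by omega)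
      (by omega) (by omega) (by linarith) (by linarith)]
    split_ifs <;> omega
  · rcases lt_or_ge (14 * q + 13) (42 * n - 15) with h | h
    · rw [delta_formula n (14*q+13) (7*q+7) (10*q+10) (11*q+11) hn (by omega) (by omega)
        (by omega) (by omega) (by linarith) (by linarith)]
      split_ifs <;> omega
    · rw [delta_formula n (14*q+13) (7*q+7) (10*q+10) (11*q+10) hn (by omega) (by omega)
        (by omega) (by omega) (by linarith) (by linarith)]
      split_ifs <;> omega

set_option maxHeartbeats 2000000 in
lemma delta_nonneg (n j : ℤ) (hn : 1 ≤ n) (hj : 0 ≤ j)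
    (h3 : j % 14 = 3 → 70 * n - 25 ≤ j)
    (h9 : j % 14 = 9 → 14 * n - 5 ≤ j)
    (h13 : j % 14 = 13 → 42 * n - 15 ≤ j) :
    0 ≤ delta27m5 n j := by
  obtain ⟨q, r, hr0, hr13, rfl⟩ : ∃ q r : ℤ, 0 ≤ r ∧ r ≤ 13 ∧ j = 14 * q + r :=
    ⟨j / 14, j % 14, by omega, by omega, by omega⟩
  have hq : 0 ≤ q := by omega
  interval_cases r
  · have h := delta_ge n (14*q+0) (7*q+0) (10*q+0) (11*q+0) hn (by omega)
      (by omega) (by linarith)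
    linarith
  · have h := delta_ge n (14*q+1) (7*q+1) (10*q+1) (11*q+1) hn (by omega)
      (by omega) (by linarith)
    linarith
  · have h := delta_ge n (14*q+2) (7*q+1) (10*q+2) (11*q+2) hn (by omega)
      (by omega) (by linarith)
    linarith
  · have hb := h3 (by omega)
    have h := delta_ge n (14*q+3) (7*q+2) (10*q+3) (11*q+2) hn (by omega)
      (by omega) (by linarith)
    linarith
  · have h := delta_ge n (14*q+4) (7*q+2) (10*q+3) (11*q+4) hn (by omega)
      (by omega) (by linarith)
    linarith
  · have h := delta_ge n (14*q+5) (7*q+3) (10*q+4) (11*q+4) hn (by omega)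
      (by omega) (by linarith)
    linarith
  · have h := delta_ge n (14*q+6) (7*q+3) (10*q+5) (11*q+5) hn (by omega)
      (by omega) (by linarith)
    linarith
  · have h := delta_ge n (14*q+7) (7*q+4) (10*q+5) (11*q+6) hn (by omega)
      (by omega) (by linarith)
    linarith
  · have h := delta_ge n (14*q+8) (7*q+4) (10*q+6) (11*q+7) hn (by omega)
      (by omega) (by linarith)
    linarith
  · have hb := h9 (by omega)
    have h := delta_ge n (14*q+9) (7*q+5) (10*q+7) (11*q+7) hn (by omega)
      (by omega) (by linarith)
    linarith
  · have h := delta_ge n (14*q+10) (7*q+5) (10*q+8) (11*q+8) hn (by omega)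
      (by omega) (by linarith)
    linarith
  · have h := delta_ge n (14*q+11) (7*q+6) (10*q+8) (11*q+9) hn (by omega)
      (by omega) (by linarith)
    linarith
  · have h := delta_ge n (14*q+12) (7*q+6) (10*q+9) (11*q+10) hn (by omega)
      (by omega) (by linarith)
    linarith
  · have hb := h13 (by omega)
    have h := delta_ge n (14*q+13) (7*q+7) (10*q+10) (11*q+10) hn (by omega)
      (by omega) (by linarith)
    linarith

set_option maxHeartbeats 2000000 in
lemma delta_nonpos (n j : ℤ) (hn : 1 ≤ n) (hj : 0 ≤ j) (hj6 : j < 84 * n - 30)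
    (h0 : j % 14 ≠ 0)
    (h4 : j % 14 = 4 → j < 28 * n - 10)
    (h8 : j % 14 = 8 → j < 56 * n - 20) :
    delta27m5 n j ≤ 0 := by
  obtain ⟨q, r, hr0, hr13, rfl⟩ : ∃ q r : ℤ, 0 ≤ r ∧ r ≤ 13 ∧ j = 14 * q + r :=
    ⟨j / 14, j % 14, by omega, by omega, by omega⟩
  have hq : 0 ≤ q := by omega
  interval_cases r
  · exact absurd (by omega) h0
  · have h := delta_le n (14*q+1) (7*q+1) (10*q+1) (11*q+1) hn (by omega)
      (by omega) (by linarith)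
    linarith
  · have h := delta_le n (14*q+2) (7*q+1) (10*q+2) (11*q+2) hn (by omega)
      (by omega) (by linarith)
    linarith
  · have h := delta_le n (14*q+3) (7*q+2) (10*q+3) (11*q+2) hn (by omega)
      (by omega) (by linarith)
    linarith
  · have hb := h4 (by omega)
    have h := delta_le n (14*q+4) (7*q+2) (10*q+3) (11*q+4) hn (by omega)
      (by omega) (by linarith)
    linarith
  · have h := delta_le n (14*q+5) (7*q+3) (10*q+4) (11*q+4) hn (by omega)
      (by omega) (by linarith)
    linarith
  · have h := delta_le n (14*q+6) (7*q+3) (10*q+5) (11*q+5) hn (by omega)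
      (by omega) (by linarith)
    linarith
  · have h := delta_le n (14*q+7) (7*q+4) (10*q+5) (11*q+6) hn (by omega)
      (by omega) (by linarith)
    linarith
  · have hb := h8 (by omega)
    have h := delta_le n (14*q+8) (7*q+4) (10*q+6) (11*q+7) hn (by omega)
      (by omega) (by linarith)
    linarith
  · have h := delta_le n (14*q+9) (7*q+5) (10*q+7) (11*q+7) hn (by omega)
      (by omega) (by linarith)
    linarith
  · have h := delta_le n (14*q+10) (7*q+5) (10*q+8) (11*q+8) hn (by omega)
      (by omega) (by linarith)
    linarith
  · have h := delta_le n (14*q+11) (7*q+6) (10*q+8) (11*q+9) hn (by omega)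
      (by omega) (by linarith)
    linarith
  · have h := delta_le n (14*q+12) (7*q+6) (10*q+9) (11*q+10) hn (by omega)
      (by omega) (by linarith)
    linarith
  · have h := delta_le n (14*q+13) (7*q+7) (10*q+10) (11*q+10) hn (by omega)
      (by omega) (by linarith)
    linarith

/-- Closed form for `τ(14q)`, `0 ≤ q ≤ 5n-2`. -/
def Tf27 (n q : ℤ) : ℤ :=
  if q ≤ n - 1 then -2 * q
  else if q ≤ 2 * n - 1 then 1 - n - q
  else if q ≤ 3 * n - 2 then 2 - 3 * n
  else if q ≤ 4 * n - 2 then q - 6 * n + 4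
  else 2 * q - 10 * n + 6

set_option maxHeartbeats 2000000 in
lemma tau14 (n : ℤ) (hn : 1 ≤ n) :
    ∀ q : ℤ, 0 ≤ q → q ≤ 5 * n - 2 → tau27m5 n (14 * q) = Tf27 n q := by
  refine fun q hq0 => Int.le_induction
    (motive := fun q _ => q ≤ 5 * n - 2 → tau27m5 n (14 * q) = Tf27 n q) ?_ ?_ q hq0
  · intro _
    have h : tau27m5 n 0 = 0 := by simp [tau27m5]
    rw [show (14 * (0:ℤ)) = 0 by norm_num, h]
    simp only [Tf27]
    split_ifs <;> omega
  · intro q hq ih h5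
    have ihv := ih (by omega)
    have d0 : delta27m5 n (14*q) = 1 := by
      rw [delta_eval n (14*q) hn (by omega) (by omega)]
      split_ifs <;> omega
    have d1 : delta27m5 n (14*q+1) = 0 := by
      rw [delta_eval n (14*q+1) hn (by omega) (by omega)]
      split_ifs <;> omega
    have d2 : delta27m5 n (14*q+2) = 0 := by
      rw [delta_eval n (14*q+2) hn (by omega) (by omega)]
      split_ifs <;> omega
    have d3 : delta27m5 n (14*q+3) = -1 := by
      rw [delta_eval n (14*q+3) hn (by omega) (by omega)]
      split_ifs <;> omega
    have d4 : delta27m5 n (14*q+4) = if 14*q+4 < 28 * n - 10 then 0 else 1 := by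
      rw [delta_eval n (14*q+4) hn (by omega) (by omega)]
      split_ifs <;> omega
    have d5 : delta27m5 n (14*q+5) = 0 := by
      rw [delta_eval n (14*q+5) hn (by omega) (by omega)]
      split_ifs <;> omega
    have d6 : delta27m5 n (14*q+6) = 0 := by
      rw [delta_eval n (14*q+6) hn (by omega) (by omega)]
      split_ifs <;> omega
    have d7 : delta27m5 n (14*q+7) = 0 := by
      rw [delta_eval n (14*q+7) hn (by omega) (by omega)]
      split_ifs <;> omega
    have d8 : delta27m5 n (14*q+8) = if 14*q+8 < 56 * n - 20 then 0 else 1 := by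
      rw [delta_eval n (14*q+8) hn (by omega) (by omega)]
      split_ifs <;> omega
    have d9 : delta27m5 n (14*q+9) = if 14*q+9 < 14 * n - 5 then -1 else 0 := by
      rw [delta_eval n (14*q+9) hn (by omega) (by omega)]
      split_ifs <;> omega
    have d10 : delta27m5 n (14*q+10) = 0 := by
      rw [delta_eval n (14*q+10) hn (by omega) (by omega)]
      split_ifs <;> omega
    have d11 : delta27m5 n (14*q+11) = 0 := by
      rw [delta_eval n (14*q+11) hn (by omega) (by omega)]
      split_ifs <;> omega
    have d12 : delta27m5 n (14*q+12) = 0 := by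
      rw [delta_eval n (14*q+12) hn (by omega) (by omega)]
      split_ifs <;> omega
    have d13 : delta27m5 n (14*q+13) = if 14*q+13 < 42 * n - 15 then -1 else 0 := by
      rw [delta_eval n (14*q+13) hn (by omega) (by omega)]
      split_ifs <;> omega
    have s1 : tau27m5 n (14*q+1) = tau27m5 n (14*q) + delta27m5 n (14*q) :=
      tau_step n (14*q) (by omega)
    have s2 : tau27m5 n (14*q+2) = tau27m5 n (14*q+1) + delta27m5 n (14*q+1) := by
      have h := tau_step n (14*q+1) (by omega)
      rw [show (14*q+1+1 : ℤ) = 14*q+2 by ring] at h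
      exact h
    have s3 : tau27m5 n (14*q+3) = tau27m5 n (14*q+2) + delta27m5 n (14*q+2) := by
      have h := tau_step n (14*q+2) (by omega)
      rw [show (14*q+2+1 : ℤ) = 14*q+3 by ring] at h
      exact h
    have s4 : tau27m5 n (14*q+4) = tau27m5 n (14*q+3) + delta27m5 n (14*q+3) := by
      have h := tau_step n (14*q+3) (by omega)
      rw [show (14*q+3+1 : ℤ) = 14*q+4 by ring] at h
      exact h
    have s5 : tau27m5 n (14*q+5) = tau27m5 n (14*q+4) + delta27m5 n (14*q+4) := by
      have h := tau_step n (14*q+4) (by omega)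
      rw [show (14*q+4+1 : ℤ) = 14*q+5 by ring] at h
      exact h
    have s6 : tau27m5 n (14*q+6) = tau27m5 n (14*q+5) + delta27m5 n (14*q+5) := by
      have h := tau_step n (14*q+5) (by omega)
      rw [show (14*q+5+1 : ℤ) = 14*q+6 by ring] at h
      exact h
    have s7 : tau27m5 n (14*q+7) = tau27m5 n (14*q+6) + delta27m5 n (14*q+6) := by
      have h := tau_step n (14*q+6) (by omega)
      rw [show (14*q+6+1 : ℤ) = 14*q+7 by ring] at h
      exact h
    have s8 : tau27m5 n (14*q+8) = tau27m5 n (14*q+7) + delta27m5 n (14*q+7) := by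
      have h := tau_step n (14*q+7) (by omega)
      rw [show (14*q+7+1 : ℤ) = 14*q+8 by ring] at h
      exact h
    have s9 : tau27m5 n (14*q+9) = tau27m5 n (14*q+8) + delta27m5 n (14*q+8) := by
      have h := tau_step n (14*q+8) (by omega)
      rw [show (14*q+8+1 : ℤ) = 14*q+9 by ring] at h
      exact h
    have s10 : tau27m5 n (14*q+10) = tau27m5 n (14*q+9) + delta27m5 n (14*q+9) := by
      have h := tau_step n (14*q+9) (by omega)
      rw [show (14*q+9+1 : ℤ) = 14*q+10 by ring] at h
      exact h
    have s11 : tau27m5 n (14*q+11) = tau27m5 n (14*q+10) + delta27m5 n (14*q+10) := by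
      have h := tau_step n (14*q+10) (by omega)
      rw [show (14*q+10+1 : ℤ) = 14*q+11 by ring] at h
      exact h
    have s12 : tau27m5 n (14*q+12) = tau27m5 n (14*q+11) + delta27m5 n (14*q+11) := by
      have h := tau_step n (14*q+11) (by omega)
      rw [show (14*q+11+1 : ℤ) = 14*q+12 by ring] at h
      exact h
    have s13 : tau27m5 n (14*q+13) = tau27m5 n (14*q+12) + delta27m5 n (14*q+12) := by
      have h := tau_step n (14*q+12) (by omega)
      rw [show (14*q+12+1 : ℤ) = 14*q+13 by ring] at h
      exact h
    have s14 : tau27m5 n (14*q+14) = tau27m5 n (14*q+13) + delta27m5 n (14*q+13) := by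
      have h := tau_step n (14*q+13) (by omega)
      rw [show (14*q+13+1 : ℤ) = 14*q+14 by ring] at h
      exact h
    rw [show (14*(q+1) : ℤ) = 14*q+14 by ring, s14, s13, s12, s11, s10, s9, s8, s7, s6,
      s5, s4, s3, s2, s1, ihv, d0, d1, d2, d3, d4, d5, d6, d7, d8, d9, d10, d11, d12, d13]
    clear ihv d0 d1 d2 d3 d4 d5 d6 d7 d8 d9 d10 d11 d12 d13 s1 s2 s3 s4 s5 s6 s7 s8 s9 s10 s11 s12 s13 s14 ih
    simp only [Tf27]
    split_ifs <;> omega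

lemma tau1 (n q : ℤ) (hn : 1 ≤ n) (h0 : 0 ≤ q) (h5 : q ≤ 5 * n - 2) :
    tau27m5 n (14 * q + 1) = Tf27 n q + 1 := by
  have d0 : delta27m5 n (14*q) = 1 := by
    rw [delta_eval n (14*q) hn (by omega) (by omega)]
    split_ifs <;> omega
  rw [show (14*q+1 : ℤ) = 14*q+1 from rfl, tau_step n (14*q) (by omega),
    tau14 n hn q h0 h5, d0]

lemma tau4 (n q : ℤ) (hn : 1 ≤ n) (h0 : 0 ≤ q) (h5 : q ≤ 5 * n - 3) :
    tau27m5 n (14 * q + 4) = Tf27 n q := by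
  have d0 : delta27m5 n (14*q) = 1 := by
    rw [delta_eval n (14*q) hn (by omega) (by omega)]
    split_ifs <;> omega
  have d1 : delta27m5 n (14*q+1) = 0 := by
    rw [delta_eval n (14*q+1) hn (by omega) (by omega)]
    split_ifs <;> omega
  have d2 : delta27m5 n (14*q+2) = 0 := by
    rw [delta_eval n (14*q+2) hn (by omega) (by omega)]
    split_ifs <;> omega
  have d3 : delta27m5 n (14*q+3) = -1 := by
    rw [delta_eval n (14*q+3) hn (by omega) (by omega)]
    split_ifs <;> omega
  have s1 : tau27m5 n (14*q+1) = tau27m5 n (14*q) + delta27m5 n (14*q) :=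
    tau_step n (14*q) (by omega)
  have s2 : tau27m5 n (14*q+2) = tau27m5 n (14*q+1) + delta27m5 n (14*q+1) := by
    have h := tau_step n (14*q+1) (by omega)
    rw [show (14*q+1+1 : ℤ) = 14*q+2 by ring] at h
    exact h
  have s3 : tau27m5 n (14*q+3) = tau27m5 n (14*q+2) + delta27m5 n (14*q+2) := by
    have h := tau_step n (14*q+2) (by omega)
    rw [show (14*q+2+1 : ℤ) = 14*q+3 by ring] at h
    exact h
  have s4 : tau27m5 n (14*q+4) = tau27m5 n (14*q+3) + delta27m5 n (14*q+3) := by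
    have h := tau_step n (14*q+3) (by omega)
    rw [show (14*q+3+1 : ℤ) = 14*q+4 by ring] at h
    exact h
  rw [s4, s3, s2, s1, tau14 n hn q h0 (by omega), d0, d1, d2, d3]
  ring

lemma tau5 (n q : ℤ) (hn : 1 ≤ n) (h0 : 2 * n - 1 ≤ q) (h5 : q ≤ 5 * n - 3) :
    tau27m5 n (14 * q + 5) = Tf27 n q + 1 := by
  have d4 : delta27m5 n (14*q+4) = 1 := by
    rw [delta_eval n (14*q+4) hn (by omega) (by omega)]
    split_ifs <;> omega
  have s5 : tau27m5 n (14*q+5) = tau27m5 n (14*q+4) + delta27m5 n (14*q+4) := by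
    have h := tau_step n (14*q+4) (by omega)
    rw [show (14*q+4+1 : ℤ) = 14*q+5 by ring] at h
    exact h
  rw [s5, tau4 n q hn (by omega) h5, d4]

set_option maxHeartbeats 2000000 in
/-- Structure of the tau function of `Σ(2,7,14n-5)` (`n ≥ 1`): monotonicity between the
local extrema `M_i`, `m_i`, and the values of `τ` at those extrema. -/
theorem tau_structure_27m5 (n : ℤ) (hn : 1 ≤ n) :
    (∀ i : ℤ, 0 ≤ i → i ≤ 6 * n - 4 → ∀ j : ℤ, m27m5 n i ≤ j → j < M27m5 n i →
      tau27m5 n j ≤ tau27m5 n (j + 1)) ∧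
    (∀ i : ℤ, 0 ≤ i → i ≤ 6 * n - 4 → ∀ j : ℤ, M27m5 n i ≤ j → j < m27m5 n (i + 1) →
      tau27m5 n (j + 1) ≤ tau27m5 n j) ∧
    (∀ j : ℤ, m27m5 n (6 * n - 3) ≤ j → tau27m5 n j ≤ tau27m5 n (j + 1)) ∧
    (∀ i : ℤ, 0 ≤ i → i ≤ n - 1 → tau27m5 n (M27m5 n i) = 1 - 2 * i) ∧
    (∀ i : ℤ, n ≤ i → i ≤ 2 * n - 1 → tau27m5 n (M27m5 n i) = 2 - n - i) ∧
    (∀ i : ℤ, 2 * n ≤ i → i ≤ 4 * n - 4 → tau27m5 n (M27m5 n i) = 3 - 3 * n) ∧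
    (∀ i : ℤ, 4 * n - 3 ≤ i → i ≤ 5 * n - 3 → tau27m5 n (M27m5 n i) = 6 - 7 * n + i) ∧
    (∀ i : ℤ, 5 * n - 2 ≤ i → i ≤ 6 * n - 4 → tau27m5 n (M27m5 n i) = 9 - 12 * n + 2 * i) ∧
    (∀ i : ℤ, 0 ≤ i → i ≤ n - 1 → tau27m5 n (m27m5 n i) = -2 * i) ∧
    (∀ i : ℤ, n ≤ i → i ≤ 2 * n - 1 → tau27m5 n (m27m5 n i) = 1 - n - i) ∧
    (∀ i : ℤ, 2 * n ≤ i → i ≤ 4 * n - 3 → tau27m5 n (m27m5 n i) = 2 - 3 * n) ∧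
    (∀ i : ℤ, 4 * n - 2 ≤ i → i ≤ 5 * n - 2 → tau27m5 n (m27m5 n i) = 4 - 7 * n + i) ∧
    (∀ i : ℤ, 5 * n - 1 ≤ i → i ≤ 6 * n - 3 → tau27m5 n (m27m5 n i) = 6 - 12 * n + 2 * i) := by
  refine ⟨?_, ?_, ?_, ?_, ?_, ?_, ?_, ?_, ?_, ?_, ?_, ?_, ?_⟩
  · -- (a1) increasing on [m_i, M_i)
    intro i h0i h6i j h1 h2
    have hj0 : 0 ≤ j := by
      simp only [m27m5] at h1
      split_ifs at h1 <;> omega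
    rw [tau_step n j hj0]
    have hd : 0 ≤ delta27m5 n j := by
      simp only [m27m5] at h1
      simp only [M27m5] at h2
      split_ifs at h1 h2 <;>
        exact delta_nonneg n j hn (by omega) (by omega) (by omega) (by omega)
    omega
  · -- (a2) decreasing on [M_i, m_{i+1})
    intro i h0i h6i j h1 h2
    have hj0 : 0 ≤ j := by
      simp only [M27m5] at h1
      split_ifs at h1 <;> omega
    rw [tau_step n j hj0]
    have hd : delta27m5 n j ≤ 0 := by
      simp only [M27m5] at h1
      simp only [m27m5] at h2
      split_ifs at h1 h2 <;>
        exact delta_nonpos n j hn (by omega) (by omega) (by omega) (by omega) (by omega)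
    omega
  · -- (a3) increasing tail
    intro j hj
    simp only [m27m5] at hj
    split_ifs at hj <;>
      (rw [tau_step n j (by omega)]
       have hd := delta_nonneg n j hn (by omega) (by omega) (by omega) (by omega)
       omega)
  · -- (b1)
    intro i h1 h2
    simp only [M27m5]
    rw [if_pos (by omega : i ≤ 2 * n - 1), tau1 n i hn (by omega) (by omega)]
    simp only [Tf27]
    split_ifs <;> omega
  · -- (b2)
    intro i h1 h2
    simp only [M27m5]
    rw [if_pos (by omega : i ≤ 2 * n - 1), tau1 n i hn (by omega) (by omega)]
    simp only [Tf27]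
    split_ifs <;> omega
  · -- (b3)
    intro i h1 h2
    simp only [M27m5]
    rw [if_neg (by omega), if_pos (by omega)]
    rcases (by omega : i % 2 = 0 ∨ i % 2 = 1) with hp | hp
    · rw [if_pos hp, show (14 * (n + i / 2) - 9 : ℤ) = 14 * (n + i / 2 - 1) + 5 by ring,
        tau5 n (n + i / 2 - 1) hn (by omega) (by omega)]
      simp only [Tf27]
      split_ifs <;> omega
    · rw [if_neg (by omega), tau1 n (n + (i - 1) / 2) hn (by omega) (by omega)]
      simp only [Tf27]
      split_ifs <;> omega
  · -- (b4)
    intro i h1 h2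
    simp only [M27m5]
    rcases le_or_gt i (2 * n - 1) with hb | hb
    · rw [if_pos hb, tau1 n i hn (by omega) (by omega)]
      simp only [Tf27]
      split_ifs <;> omega
    rcases le_or_gt i (4 * n - 3) with hc | hc
    · rw [if_neg (by omega), if_pos hc, if_neg (by omega),
        tau1 n (n + (i - 1) / 2) hn (by omega) (by omega)]
      simp only [Tf27]
      split_ifs <;> omega
    · rw [if_neg (by omega), if_neg (by omega),
        show (14 * (i - n) + 15 : ℤ) = 14 * (i - n + 1) + 1 by ring,
        tau1 n (i - n + 1) hn (by omega) (by omega)]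
      simp only [Tf27]
      split_ifs <;> omega
  · -- (b5)
    intro i h1 h2
    simp only [M27m5]
    rw [if_neg (by omega), if_neg (by omega),
      show (14 * (i - n) + 15 : ℤ) = 14 * (i - n + 1) + 1 by ring,
      tau1 n (i - n + 1) hn (by omega) (by omega)]
    simp only [Tf27]
    split_ifs <;> omega
  · -- (c1)
    intro i h1 h2
    simp only [m27m5]
    rw [if_pos (by omega : i ≤ 2 * n - 1), tau14 n hn i (by omega) (by omega)]
    simp only [Tf27]
    split_ifs <;> omega
  · -- (c2)
    intro i h1 h2
    simp only [m27m5]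
    rw [if_pos (by omega : i ≤ 2 * n - 1), tau14 n hn i (by omega) (by omega)]
    simp only [Tf27]
    split_ifs <;> omega
  · -- (c3)
    intro i h1 h2
    simp only [m27m5]
    rw [if_neg (by omega), if_pos (by omega)]
    rcases (by omega : i % 2 = 0 ∨ i % 2 = 1) with hp | hp
    · rw [if_pos hp, show (14 * (n + i / 2) - 10 : ℤ) = 14 * (n + i / 2 - 1) + 4 by ring,
        tau4 n (n + i / 2 - 1) hn (by omega) (by omega)]
      simp only [Tf27]
      split_ifs <;> omega
    · rw [if_neg (by omega), tau14 n hn (n + (i - 1) / 2) (by omega) (by omega)]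
      simp only [Tf27]
      split_ifs <;> omega
  · -- (c4)
    intro i h1 h2
    simp only [m27m5]
    rcases le_or_gt i (4 * n - 2) with hc | hc
    · rw [if_neg (by omega), if_pos hc, if_pos (by omega : i % 2 = 0),
        show (14 * (n + i / 2) - 10 : ℤ) = 14 * (n + i / 2 - 1) + 4 by ring,
        tau4 n (n + i / 2 - 1) hn (by omega) (by omega)]
      simp only [Tf27]
      split_ifs <;> omega
    · rw [if_neg (by omega), if_neg (by omega),
        tau4 n (i - n) hn (by omega) (by omega)]
      simp only [Tf27]
      split_ifs <;> omega
  · -- (c5)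
    intro i h1 h2
    simp only [m27m5]
    rw [if_neg (by omega), if_neg (by omega), tau4 n (i - n) hn (by omega) (by omega)]
    simp only [Tf27]
    split_ifs <;> omega
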